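/- arXiv:0910.4443 — 3 statements merged into one kernel-verified Lean document; each statement's English description precedes it below -/
import Mathlib

section
/- Let R0 > 0. If R0 > 1, then there exists a unique z ∈ (0,1) satisfying 1 − z = exp(−R0 z). If R0 ≤ 1, then no z ∈ (0,1) satisfies 1 − z = exp(−R0 z) (so z = 0 is the only solution in [0,1)). -/
lemma final_size_aux (R0 a b : ℝ) (hR0 : 0 < R0) (ha : 0 < a) (hab : a < b)
    (h1 : 1 - a = Real.exp (-R0 * a)) (h2 : 1 - b = Real.exp (-R0 * b)) : False := by
  have hb0 : 0 < b := lt_trans ha hab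
  have hbne : b ≠ 0 := ne_of_gt hb0
  have ht : 0 < 1 - a / b := by
    have : a / b < 1 := (div_lt_one hb0).2 hab
    linarith
  have hs : 0 < a / b := div_pos ha hb0
  have hxy : (0 : ℝ) ≠ -R0 * b := by
    have : 0 < R0 * b := mul_pos hR0 hb0
    intro h; nlinarith
  have key := strictConvexOn_exp.2 (Set.mem_univ (0:ℝ)) (Set.mem_univ (-R0 * b))
    hxy ht hs (by ring)
  rw [smul_eq_mul, smul_eq_mul, smul_eq_mul, smul_eq_mul] at key
  have harg : (1 - a / b) * 0 + a / b * (-R0 * b) = -R0 * a := by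
    field_simp; ring
  rw [harg, Real.exp_zero, ← h2, ← h1] at key
  have : (1 - a / b) * 1 + a / b * (1 - b) = 1 - a := by field_simp; ring
  rw [this] at key
  linarith

/-- The final size equation `1 - z = exp (-R0 z)` has a unique solution in `(0,1)`
when `R0 > 1`, and no solution in `(0,1)` when `R0 ≤ 1`. -/
theorem final_size_equation_positive_solution
    (R0 : ℝ) (hR0 : 0 < R0) :
    (1 < R0 → ∃! z : ℝ, z ∈ Set.Ioo (0:ℝ) 1 ∧ 1 - z = Real.exp (-R0 * z)) ∧
      (R0 ≤ 1 → ∀ z ∈ Set.Ioo (0:ℝ) 1, 1 - z ≠ Real.exp (-R0 * z)) := by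
  constructor
  · intro hR1
    set c : ℝ := (R0 - 1) / (2 * R0) with hcdef
    have hc0 : 0 < c := div_pos (by linarith) (by linarith)
    have hc1 : c < 1 := by
      rw [div_lt_one (by linarith)]; linarith
    have hRc : R0 * c = (R0 - 1) / 2 := by
      rw [hcdef]; field_simp
    have hRc0 : 0 < R0 * c := mul_pos (by linarith) hc0
    -- exp (-R0 c) ≤ 1 / (1 + R0 c) < 1 - c
    have h1 : Real.exp (-R0 * c) ≤ 1 / (1 + R0 * c) := by
      rw [show -R0 * c = -(R0 * c) by ring, Real.exp_neg, one_div]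
      apply inv_anti₀ (by linarith)
      linarith [Real.add_one_le_exp (R0 * c)]
    have h2 : 1 / (1 + R0 * c) < 1 - c := by
      rw [div_lt_iff₀ (by linarith)]
      nlinarith
    have gc : Real.exp (-R0 * c) < 1 - c := lt_of_le_of_lt h1 h2
    have g1 : (0:ℝ) < Real.exp (-R0 * 1) := Real.exp_pos _
    set g : ℝ → ℝ := fun z => 1 - z - Real.exp (-R0 * z) with hg
    have hcont : ContinuousOn g (Set.Icc c 1) := by
      apply Continuous.continuousOn
      continuity
    have hmem : (0:ℝ) ∈ Set.Ioo (g 1) (g c) := by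
      constructor
      · simp only [hg]; linarith
      · simp only [hg]; linarith
    obtain ⟨z, hz, hgz⟩ := intermediate_value_Ioo' (le_of_lt hc1) hcont hmem
    have hz01 : z ∈ Set.Ioo (0:ℝ) 1 := ⟨lt_trans hc0 hz.1, hz.2⟩
    have heq : 1 - z = Real.exp (-R0 * z) := by
      simp only [hg] at hgz; linarith
    refine ⟨z, ⟨hz01, heq⟩, ?_⟩
    rintro y ⟨hy01, hyeq⟩
    by_contra hne
    rcases lt_or_gt_of_ne hne with h | h
    · exact final_size_aux R0 y z (by linarith) hy01.1 h hyeq heq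
    · exact final_size_aux R0 z y (by linarith) hz01.1 h heq hyeq
  · intro hR1 z hz heq
    have h1 : -R0 * z ≠ 0 := by
      have : 0 < R0 * z := mul_pos hR0 hz.1
      intro h; nlinarith
    have := Real.add_one_lt_exp h1
    have hle : 1 - z ≤ -R0 * z + 1 := by nlinarith [hz.1]
    linarith [heq ▸ lt_of_le_of_lt hle this]
end

section
/- Let R0 > 1 and let z ∈ (0,1) satisfy the final size equation 1 − z = exp(−R0 z). Then R0 (1 − z) < 1. -/
/-- If `z ∈ (0,1)` solves the final size equation `1 - z = exp (-R0 z)` with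
`R0 > 1`, then `R0 (1 - z) < 1` (subcriticality of the end phase). -/
theorem final_size_subcriticality
    (R0 z : ℝ) (hR0 : 1 < R0) (hz : z ∈ Set.Ioo (0:ℝ) 1)
    (hbal : 1 - z = Real.exp (-R0 * z)) :
    R0 * (1 - z) < 1 := by
  obtain ⟨hz0, hz1⟩ := hz
  have hne : R0 * z ≠ 0 := ne_of_gt (by nlinarith)
  have key : R0 * z + 1 < Real.exp (R0 * z) := Real.add_one_lt_exp hne
  have hinv : Real.exp (R0 * z) * (1 - z) = 1 := by
    rw [hbal, ← Real.exp_add]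
    simp
  nlinarith [mul_pos (sub_pos.mpr hz1) (show (0:ℝ) < R0 * z + 1 by nlinarith)]
end

section
/- Let m ≥ 1, k ≥ 0, λ' > 0 and θ ≥ 0. Let I₁, …, I_{m+k} be i.i.d. nonnegative random variables with Laplace transform φ(u) = E[exp(−u I₁)], let Z be a random variable taking values in {0, 1, …, k}, and set A = λ' · Σ_{i=1}^{m+Z} I_i. Assume that for each j ∈ {0, …, k} the random vector (I_{m+j+1}, …, I_{m+k}) is independent of the pair consisting of the indicator of {Z = j} and the vector (I₁, …, I_{m+j}). Then Wald's identity holds: E[ exp(−θ A) / (φ(θ λ'))^{m+Z} ] = 1. -/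
open MeasureTheory ProbabilityTheory Finset

private lemma wald_filter_lt_eq_map {n n' : ℕ} (h : n' ≤ n) :
    Finset.univ.filter (fun i : Fin n => (i : ℕ) < n') =
      Finset.univ.map ⟨fun i : Fin n' => (⟨(i : ℕ), lt_of_lt_of_le i.2 h⟩ : Fin n),
        fun a b hab => by simpa [Fin.ext_iff] using hab⟩ := by
  ext x
  simp only [mem_filter, mem_univ, true_and, mem_map, Function.Embedding.coeFn_mk]
  constructor
  · intro hx
    exact ⟨⟨(x : ℕ), hx⟩, Fin.ext rfl⟩
  · rintro ⟨y, rfl⟩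
    exact y.2

private lemma wald_filter_not_lt_eq_map {n n' q : ℕ} (h : n' + q = n) :
    Finset.univ.filter (fun i : Fin n => ¬ (i : ℕ) < n') =
      Finset.univ.map ⟨fun i : Fin q => (⟨n' + (i : ℕ), by omega⟩ : Fin n),
        fun a b hab => by simp only [Fin.ext_iff] at hab ⊢; omega⟩ := by
  ext x
  simp only [mem_filter, mem_univ, true_and, mem_map, Function.Embedding.coeFn_mk]
  constructor
  · intro hx
    exact ⟨⟨(x : ℕ) - n', by omega⟩, by simp only [Fin.ext_iff]; show n' + ((x : ℕ) - n') = x; omega⟩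
  · rintro ⟨y, rfl⟩
    show ¬ (n' + (y : ℕ) < n'); omega

private lemma wald_prod_head {n n' : ℕ} (h : n' ≤ n) (g : Fin n → ℝ) :
    (∏ i : Fin n, if (i : ℕ) < n' then g i else 1) =
      ∏ i : Fin n', g ⟨(i : ℕ), lt_of_lt_of_le i.2 h⟩ := by
  rw [← Finset.prod_filter, wald_filter_lt_eq_map h, Finset.prod_map]
  rfl

private lemma wald_prod_tail {n n' q : ℕ} (h : n' + q = n) (g : Fin n → ℝ) :
    (∏ i : Fin n, if (i : ℕ) < n' then 1 else g i) =
      ∏ i : Fin q, g ⟨n' + (i : ℕ), by omega⟩ := by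
  have h1 : ∀ i : Fin n, (if (i : ℕ) < n' then 1 else g i)
      = if ¬ (i : ℕ) < n' then g i else 1 := by
    intro i; by_cases hi : (i : ℕ) < n' <;> simp [hi]
  rw [Finset.prod_congr rfl (fun i _ => h1 i), ← Finset.prod_filter,
    wald_filter_not_lt_eq_map h, Finset.prod_map]
  rfl

private lemma wald_integral_prod {Ω : Type*} [MeasurableSpace Ω] {P : Measure Ω}
    [IsProbabilityMeasure P] {n : ℕ} {f : Fin n → Ω → ℝ}
    (hindep : iIndepFun f P) (hmeas : ∀ i, Measurable (f i))
    (hpos : ∀ i ω, 0 ≤ f i ω) (s : Finset (Fin n)) :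
    ∫ ω, ∏ i ∈ s, f i ω ∂P = ∏ i ∈ s, ∫ ω, f i ω ∂P := by
  classical
  induction s using Finset.induction_on with
  | empty => simp
  | @insert i s hi ih =>
    have hprod_meas : Measurable fun ω => ∏ j ∈ s, f j ω :=
      Finset.measurable_prod s fun j _ => hmeas j
    have heq : (fun ω => ∏ j ∈ s, f j ω) = ∏ j ∈ s, f j := by
      funext ω; simp [Finset.prod_apply]
    have hind : IndepFun (f i) (fun ω => ∏ j ∈ s, f j ω) P := by
      rw [heq]
      exact (hindep.indepFun_finsetProd_of_notMem hmeas hi).symm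
    have key := hind.integral_fun_mul_eq_mul_integral
      (hmeas i).aestronglyMeasurable hprod_meas.aestronglyMeasurable
    simp only [Finset.prod_insert hi]
    rw [← ih]
    exact key
/-- Wald's identity for the final size `Z` and total infection pressure
`A = λ' Σ_{i=1}^{m+Z} I_i` of the standard stochastic SIR epidemic:
`E[exp (-θ A) / φ(θ λ')^{m+Z}] = 1`, where `φ` is the Laplace transform of the
i.i.d. infectious periods and, for each `j`, the infectious periods of the
individuals escaping infection are independent of the event `{Z = j}` together
with the infectious periods of the infected individuals. -/
theorem wald_identity_epidemic
    {Ω : Type*} [MeasurableSpace Ω] (P : Measure Ω) [IsProbabilityMeasure P]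
    (m k : ℕ) (hm : 1 ≤ m)
    (lam' θ : ℝ) (hlam' : 0 < lam') (hθ : 0 ≤ θ)
    (I : Fin (m + k) → Ω → ℝ)
    (hnonneg : ∀ i ω, 0 ≤ I i ω)
    (hmeas : ∀ i, Measurable (I i))
    (hindep : iIndepFun I P)
    (hident : ∀ i, IdentDistrib (I i) (I ⟨0, by omega⟩) P P)
    (φ : ℝ → ℝ) (hφ : ∀ u, φ u = ∫ ω, Real.exp (-u * I ⟨0, by omega⟩ ω) ∂P)
    (Z : Ω → ℕ) (hZle : ∀ ω, Z ω ≤ k) (hZmeas : Measurable Z)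
    (A : Ω → ℝ)
    (hA : ∀ ω, A ω = lam' * ∑ i : Fin (m + k), if (i : ℕ) < m + Z ω then I i ω else 0)
    (hescape : ∀ (j : ℕ) (hj : j ≤ k),
      IndepFun
        (fun ω => fun i : Fin (k - j) => I ⟨m + j + i, by omega⟩ ω)
        (fun ω => ((if Z ω = j then (1:ℝ) else 0),
          fun i : Fin (m + j) => I ⟨i, by omega⟩ ω)) P) :
    ∫ ω, Real.exp (-θ * A ω) / φ (θ * lam') ^ (m + Z ω) ∂P = 1 := by
  classical
  set q : ℝ := θ * lam' with hq
  have hq0 : 0 ≤ q := mul_nonneg hθ hlam'.le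
  set c : ℝ := φ q with hc_def
  set X : Fin (m + k) → Ω → ℝ := fun i ω => Real.exp (-q * I i ω) with hX
  have hXpos : ∀ i ω, 0 < X i ω := fun i ω => Real.exp_pos _
  have hXle1 : ∀ i ω, X i ω ≤ 1 := by
    intro i ω
    simp only [hX]
    rw [← Real.exp_zero]
    exact Real.exp_le_exp.mpr (by nlinarith [hnonneg i ω])
  have hXmeas : ∀ i, Measurable (X i) := fun i =>
    Real.measurable_exp.comp ((hmeas i).const_mul (-q))
  have hXint : ∀ i, Integrable (X i) P := fun i =>
    (integrable_const (1 : ℝ)).mono' (hXmeas i).aestronglyMeasurable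
      (ae_of_all _ fun ω => by
        rw [Real.norm_eq_abs, abs_of_pos (hXpos i ω)]; exact hXle1 i ω)
  have hXindep : iIndepFun X P :=
    hindep.comp (fun _ x => Real.exp (-q * x))
      (fun _ => Real.measurable_exp.comp (measurable_id.const_mul (-q)))
  have hXint_eq : ∀ i, ∫ ω, X i ω ∂P = c := by
    intro i
    have h1 : IdentDistrib (X i) (X ⟨0, by omega⟩) P P :=
      (hident i).comp (Real.measurable_exp.comp (measurable_id.const_mul (-q)))
    rw [hc_def, hφ q]
    exact h1.integral_eq
  have hcpos : 0 < c := by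
    rw [← hXint_eq ⟨0, by omega⟩]
    rw [integral_pos_iff_support_of_nonneg (fun ω => (hXpos _ ω).le) (hXint _)]
    have hs : Function.support (X ⟨0, by omega⟩) = Set.univ :=
      Set.eq_univ_of_forall fun ω => (hXpos _ ω).ne'
    simp [hs]
  set S : Ω → ℝ := fun ω => ∏ i : Fin (m + k), X i ω with hS
  set ind : ℕ → Ω → ℝ := fun j ω => if Z ω = j then 1 else 0 with hind_def
  set F : ℕ → Ω → ℝ :=
    fun j ω => ind j ω * ∏ i : Fin (m + k), (if (i : ℕ) < m + j then X i ω else 1) with hF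
  set E : ℕ → Ω → ℝ :=
    fun j ω => ∏ i : Fin (m + k), (if (i : ℕ) < m + j then 1 else X i ω) with hE
  -- pointwise identity for exp(-θ A)
  have hexpA : ∀ ω, Real.exp (-θ * A ω)
      = ∏ i : Fin (m + k), (if (i : ℕ) < m + Z ω then X i ω else 1) := by
    intro ω
    rw [hA ω]
    have h2 : -θ * (lam' * ∑ i : Fin (m + k), (if (i : ℕ) < m + Z ω then I i ω else 0))
        = ∑ i : Fin (m + k), (if (i : ℕ) < m + Z ω then -q * I i ω else 0) := by
      rw [show -θ * (lam' * ∑ i : Fin (m + k), (if (i : ℕ) < m + Z ω then I i ω else 0))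
          = (-q) * ∑ i : Fin (m + k), (if (i : ℕ) < m + Z ω then I i ω else 0) by
        rw [hq]; ring]
      rw [Finset.mul_sum]
      exact Finset.sum_congr rfl fun i _ => by split_ifs <;> ring
    rw [h2, Real.exp_sum]
    exact Finset.prod_congr rfl fun i _ => by
      split_ifs <;> simp [hX, Real.exp_zero]
  -- measurability and bounds for F
  have hindmeas : ∀ j, Measurable (ind j) := by
    intro j
    simp only [hind_def]
    exact Measurable.ite (hZmeas (measurableSet_singleton j)) measurable_const measurable_const
  have hind01 : ∀ j ω, 0 ≤ ind j ω ∧ ind j ω ≤ 1 := by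
    intro j ω; simp only [hind_def]; constructor <;> split_ifs <;> norm_num
  have hFmeas : ∀ j, Measurable (F j) := by
    intro j
    simp only [hF]
    exact (hindmeas j).mul <| Finset.measurable_prod _ fun i _ => by
      split_ifs
      · exact hXmeas i
      · exact measurable_const
  have hFnonneg : ∀ j ω, 0 ≤ F j ω := by
    intro j ω
    exact mul_nonneg (hind01 j ω).1 <| Finset.prod_nonneg fun i _ => by
      split_ifs
      · exact (hXpos i ω).le
      · norm_num
  have hFle1 : ∀ j ω, F j ω ≤ 1 := by
    intro j ω
    have h1 : (∏ i : Fin (m + k), (if (i : ℕ) < m + j then X i ω else 1)) ≤ 1 :=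
      Finset.prod_le_one (fun i _ => by split_ifs; exacts [(hXpos i ω).le, zero_le_one])
        (fun i _ => by split_ifs; exacts [hXle1 i ω, le_refl 1])
    calc F j ω ≤ 1 * 1 := mul_le_mul (hind01 j ω).2 h1
          (Finset.prod_nonneg fun i _ => by
            split_ifs; exacts [(hXpos i ω).le, zero_le_one]) zero_le_one
    _ = 1 := one_mul 1
  have hFint : ∀ j, Integrable (F j) P := fun j =>
    (integrable_const (1 : ℝ)).mono' (hFmeas j).aestronglyMeasurable
      (ae_of_all _ fun ω => by
        rw [Real.norm_eq_abs, abs_of_nonneg (hFnonneg j ω)]; exact hFle1 j ω)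
  have hEmeas : ∀ j, Measurable (E j) := by
    intro j
    simp only [hE]
    exact Finset.measurable_prod _ fun i _ => by
      split_ifs
      · exact measurable_const
      · exact hXmeas i
  have hEnonneg : ∀ j ω, 0 ≤ E j ω := by
    intro j ω
    exact Finset.prod_nonneg fun i _ => by
      split_ifs; exacts [zero_le_one, (hXpos i ω).le]
  have hSmeas : Measurable S := Finset.measurable_prod _ fun i _ => hXmeas i
  have hSnonneg : ∀ ω, 0 ≤ S ω := fun ω => Finset.prod_nonneg fun i _ => (hXpos i ω).le
  have hSle1 : ∀ ω, S ω ≤ 1 :=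
    fun ω => Finset.prod_le_one (fun i _ => (hXpos i ω).le) (fun i _ => hXle1 i ω)
  have hSint : Integrable S P :=
    (integrable_const (1 : ℝ)).mono' hSmeas.aestronglyMeasurable
      (ae_of_all _ fun ω => by
        rw [Real.norm_eq_abs, abs_of_nonneg (hSnonneg ω)]; exact hSle1 ω)
  -- key factorization
  have key : ∀ j, j ≤ k → ∫ ω, ind j ω * S ω ∂P = c ^ (k - j) * ∫ ω, F j ω ∂P := by
    intro j hj
    have hEeq : ∀ ω, E j ω
        = (fun v : Fin (k - j) → ℝ => ∏ i : Fin (k - j), Real.exp (-q * v i))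
          (fun i : Fin (k - j) => I ⟨m + j + i, by omega⟩ ω) := by
      intro ω
      simp only [hE]
      exact wald_prod_tail (by omega) (fun i => X i ω)
    have hFeq : ∀ ω, F j ω
        = (fun p : ℝ × (Fin (m + j) → ℝ) =>
            p.1 * ∏ i : Fin (m + j), Real.exp (-q * p.2 i))
          ((if Z ω = j then (1:ℝ) else 0), fun i : Fin (m + j) => I ⟨i, by omega⟩ ω) := by
      intro ω
      simp only [hF, hind_def]
      congr 1
      exact wald_prod_head (by omega) (fun i => X i ω)
    have h1meas : Measurable fun v : Fin (k - j) → ℝ =>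
        ∏ i : Fin (k - j), Real.exp (-q * v i) :=
      Finset.measurable_prod _ fun i _ =>
        Real.measurable_exp.comp (by fun_prop)
    have h2meas : Measurable fun p : ℝ × (Fin (m + j) → ℝ) =>
        p.1 * ∏ i : Fin (m + j), Real.exp (-q * p.2 i) :=
      measurable_fst.mul <| Finset.measurable_prod _ fun i _ =>
        Real.measurable_exp.comp (by fun_prop)
    have hindep2 : IndepFun (E j) (F j) P := by
      have h := ((hescape j hj).comp h1meas h2meas)
      have e1 : ((fun v : Fin (k - j) → ℝ => ∏ i : Fin (k - j), Real.exp (-q * v i)) ∘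
          (fun ω => fun i : Fin (k - j) => I ⟨m + j + i, by omega⟩ ω)) = E j :=
        funext fun ω => (hEeq ω).symm
      have e2 : ((fun p : ℝ × (Fin (m + j) → ℝ) =>
            p.1 * ∏ i : Fin (m + j), Real.exp (-q * p.2 i)) ∘
          (fun ω => ((if Z ω = j then (1:ℝ) else 0),
            fun i : Fin (m + j) => I ⟨i, by omega⟩ ω))) = F j :=
        funext fun ω => (hFeq ω).symm
      rwa [e1, e2] at h
    have hmul := hindep2.integral_mul_eq_mul_integral
      (hEmeas j).aestronglyMeasurable (hFmeas j).aestronglyMeasurable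
    have hpoint : ∀ ω, E j ω * F j ω = ind j ω * S ω := by
      intro ω
      simp only [hE, hF, hS, hind_def]
      have h3 : (∏ i : Fin (m + k), (if (i : ℕ) < m + j then (1:ℝ) else X i ω))
          * (∏ i : Fin (m + k), (if (i : ℕ) < m + j then X i ω else 1))
          = ∏ i : Fin (m + k), X i ω := by
        rw [← Finset.prod_mul_distrib]
        exact Finset.prod_congr rfl fun i _ => by split_ifs <;> ring
      calc (∏ i : Fin (m + k), (if (i : ℕ) < m + j then (1:ℝ) else X i ω))
            * ((if Z ω = j then (1:ℝ) else 0)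
              * ∏ i : Fin (m + k), (if (i : ℕ) < m + j then X i ω else 1))
          = (if Z ω = j then (1:ℝ) else 0)
            * ((∏ i : Fin (m + k), (if (i : ℕ) < m + j then (1:ℝ) else X i ω))
              * ∏ i : Fin (m + k), (if (i : ℕ) < m + j then X i ω else 1)) := by ring
        _ = _ := by rw [h3]
    have hEint_eq : ∫ ω, E j ω ∂P = c ^ (k - j) := by
      have h1 : ∀ ω, E j ω = ∏ i ∈ Finset.univ.filter
          (fun i : Fin (m + k) => ¬ (i : ℕ) < m + j), X i ω := by
        intro ω
        simp only [hE]
        rw [Finset.prod_filter]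
        exact Finset.prod_congr rfl fun i _ => by
          by_cases hi : (i : ℕ) < m + j <;> simp [hi]
      simp only [h1]
      rw [wald_integral_prod hXindep hXmeas (fun i ω => (hXpos i ω).le),
        wald_filter_not_lt_eq_map (show m + j + (k - j) = m + k by omega), Finset.prod_map]
      simp only [Function.Embedding.coeFn_mk, hXint_eq]
      rw [Finset.prod_const]
      simp
    have h4 : (fun ω => ind j ω * S ω) = E j * F j := funext fun ω => (hpoint ω).symm
    show ∫ ω, ind j ω * S ω ∂P = _
    rw [h4, hmul, hEint_eq]
  -- integral of S
  have hSint_eq : ∫ ω, S ω ∂P = c ^ (m + k) := by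
    simp only [hS]
    rw [wald_integral_prod hXindep hXmeas (fun i ω => (hXpos i ω).le)]
    simp [hXint_eq]
  have hindS_int : ∀ j, Integrable (fun ω => ind j ω * S ω) P := fun j =>
    (integrable_const (1 : ℝ)).mono' ((hindmeas j).mul hSmeas).aestronglyMeasurable
      (ae_of_all _ fun ω => by
        rw [Real.norm_eq_abs, abs_of_nonneg (mul_nonneg (hind01 j ω).1 (hSnonneg ω))]
        calc ind j ω * S ω ≤ 1 * 1 :=
              mul_le_mul (hind01 j ω).2 (hSle1 ω) (hSnonneg ω) zero_le_one
          _ = 1 := one_mul 1)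
  -- pointwise decomposition of the integrand
  have hsum_point : ∀ ω, Real.exp (-θ * A ω) / c ^ (m + Z ω)
      = ∑ j ∈ Finset.range (k + 1), F j ω / c ^ (m + j) := by
    intro ω
    have hz : ∑ j ∈ Finset.range (k + 1), F j ω / c ^ (m + j)
        = F (Z ω) ω / c ^ (m + Z ω) := by
      refine Finset.sum_eq_single_of_mem _
        (Finset.mem_range.mpr (by have := hZle ω; omega)) (fun j _ hne => ?_)
      simp only [hF, hind_def]
      rw [if_neg (Ne.symm hne)]
      simp
    rw [hz, hexpA ω]
    simp [hF, hind_def]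
  calc ∫ ω, Real.exp (-θ * A ω) / c ^ (m + Z ω) ∂P
      = ∫ ω, ∑ j ∈ Finset.range (k + 1), F j ω / c ^ (m + j) ∂P := by
        simp only [hsum_point]
    _ = ∑ j ∈ Finset.range (k + 1), ∫ ω, F j ω / c ^ (m + j) ∂P :=
        integral_finset_sum _ (fun j _ => (hFint j).div_const _)
    _ = ∑ j ∈ Finset.range (k + 1), (∫ ω, F j ω ∂P) / c ^ (m + j) := by
        simp [integral_div]
    _ = ∑ j ∈ Finset.range (k + 1), (∫ ω, ind j ω * S ω ∂P) / c ^ (m + k) := by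
        refine Finset.sum_congr rfl fun j hj => ?_
        have hj' : j ≤ k := by
          have := Finset.mem_range.mp hj; omega
        rw [key j hj',
          show (c : ℝ) ^ (m + k) = c ^ (k - j) * c ^ (m + j) by
            rw [← pow_add]; congr 1; omega,
          mul_div_mul_left _ _ (pow_ne_zero _ hcpos.ne')]
    _ = (∑ j ∈ Finset.range (k + 1), ∫ ω, ind j ω * S ω ∂P) / c ^ (m + k) := by
        rw [← Finset.sum_div]
    _ = (∫ ω, ∑ j ∈ Finset.range (k + 1), ind j ω * S ω ∂P) / c ^ (m + k) := by
        rw [← integral_finset_sum _ (fun j _ => hindS_int j)]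
    _ = (∫ ω, S ω ∂P) / c ^ (m + k) := by
        congr 1
        have h5 : ∀ ω, ∑ j ∈ Finset.range (k + 1), ind j ω * S ω = S ω := by
          intro ω
          rw [← Finset.sum_mul]
          have h6 : ∑ j ∈ Finset.range (k + 1), ind j ω = 1 := by
            simp only [hind_def]
            rw [Finset.sum_ite_eq (Finset.range (k + 1)) (Z ω) (fun _ => (1 : ℝ)),
              if_pos (Finset.mem_range.mpr (by have := hZle ω; omega))]
          rw [h6, one_mul]
        simp only [h5]
    _ = 1 := by rw [hSint_eq, div_self (pow_ne_zero _ hcpos.ne')]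
end
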